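/- Let d ≥ 8 be an integer that is a power of a prime number, and suppose that there is no MDS code over the alphabet Fin d of wordlength d+2 and combinatorial dimension ⌊(d+2)/2⌋ (this is an instance of the general MDS conjecture). Then an AME(d+1,d) state of minimal support exists and, for every integer n ≥ d+2, no AME(n,d) state of minimal support exists; that is, N(d) = d+1. -/

import Mathlib

open scoped BigOperators Classical

noncomputable section

namespace AMEPaper

/-- Combine a configuration on the complement of `B` with a configuration on `B`
into a full configuration on `Fin n`. -/
def combine {n d : ℕ} (B : Finset (Fin n)) (a : {i : Fin n // i ∉ B} → Fin d)
    (b : {i : Fin n // i ∈ B} → Fin d) : Fin n → Fin d :=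
  fun i => if h : i ∈ B then b ⟨i, h⟩ else a ⟨i, h⟩

/-- `ψ` is an absolutely maximally entangled state with `n` sites and local dimension `d`:
it is a unit vector and, for every set `B` of at most `n/2` sites, the reduced density
matrix on `B` equals `d ^ (-|B|)` times the identity. -/
def IsAME (n d : ℕ) (ψ : (Fin n → Fin d) → ℂ) : Prop :=
  (∑ s : Fin n → Fin d, ‖ψ s‖ ^ 2 = 1) ∧
  ∀ B : Finset (Fin n), B.card ≤ n / 2 →
    ∀ b b' : {i : Fin n // i ∈ B} → Fin d,
      (∑ a : {i : Fin n // i ∉ B} → Fin d,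
          ψ (combine B a b) * (starRingEnd ℂ) (ψ (combine B a b'))) =
        if b = b' then ((d : ℂ) ^ B.card)⁻¹ else 0

/-- `ψ` has minimal support: its support in the computational basis has exactly
`d ^ ⌊n/2⌋` elements. -/
def HasMinimalSupport (n d : ℕ) (ψ : (Fin n → Fin d) → ℂ) : Prop :=
  {s : Fin n → Fin d | ψ s ≠ 0}.ncard = d ^ (n / 2)

/-- `C` is an MDS code over the alphabet `Fin d` with wordlength `n` and minimum
Hamming distance `δ`: its minimum distance is exactly `δ` and it meets the Singleton
bound, `|C| = d ^ (n - δ + 1)`. -/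
def IsMDSCode (d n δ : ℕ) (C : Finset (Fin n → Fin d)) : Prop :=
  C.card = d ^ (n - δ + 1) ∧
  (∀ w ∈ C, ∀ w' ∈ C, w ≠ w' → δ ≤ hammingDist w w') ∧
  (∃ w ∈ C, ∃ w' ∈ C, w ≠ w' ∧ hammingDist w w' = δ)

/-- A latin `k`-hypercube of order `d`: fixing all indices but any one of them, the
resulting map `Fin d → Fin d` is a bijection. -/
def IsLatinHypercube (k d : ℕ) (L : (Fin k → Fin d) → Fin d) : Prop :=
  ∀ (i : Fin k) (x : Fin k → Fin d),
    Function.Bijective fun v : Fin d => L (Function.update x i v)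

/-- Two latin `k`-hypercubes are orthogonal if for every pair of distinct indices and
all ways of fixing the remaining indices, the two resulting latin squares are
orthogonal. -/
def AreOrthogonalHypercubes (k d : ℕ) (L M : (Fin k → Fin d) → Fin d) : Prop :=
  ∀ (i j : Fin k), i ≠ j → ∀ x : Fin k → Fin d,
    Function.Injective fun p : Fin d × Fin d =>
      (L (Function.update (Function.update x i p.1) j p.2),
       M (Function.update (Function.update x i p.1) j p.2))

/-- A latin square of order `d`: every row and every column is a bijection. -/
def IsLatinSquare (d : ℕ) (L : Fin d × Fin d → Fin d) : Prop :=
  (∀ i : Fin d, Function.Bijective fun j => L (i, j)) ∧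
  (∀ j : Fin d, Function.Bijective fun i => L (i, j))

def agr {n d : ℕ} (c c' : Fin n → Fin d) : ℕ :=
  (Finset.univ.filter fun i => c i = c' i).card

def Good (d n k : ℕ) (C : Finset (Fin n → Fin d)) : Prop :=
  C.card = d ^ k ∧ ∀ c ∈ C, ∀ c' ∈ C, k ≤ agr c c' → c = c'

lemma agr_add_hammingDist (c c' : Fin n → Fin d) :
    agr c c' + hammingDist c c' = n := by
  classical
  have := Finset.card_filter_add_card_filter_not (s := (Finset.univ : Finset (Fin n)))
    (fun i => c i = c' i)
  simpa [agr, hammingDist, Finset.card_univ] using this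

lemma agr_self (c : Fin n → Fin d) : agr c c = n := by
  simp [agr, Finset.card_univ]

lemma card_le_of_determined {d n m : ℕ} (hm : m ≤ n) (C : Finset (Fin n → Fin d))
    (h : ∀ c ∈ C, ∀ c' ∈ C, m ≤ agr c c' → c = c') : C.card ≤ d ^ m := by
  classical
  obtain ⟨S, -, hScard⟩ := Finset.exists_superset_card_eq (s := (∅ : Finset (Fin n)))
    (by simp) (by simpa using hm)
  have hinj : Set.InjOn (fun c : Fin n → Fin d => fun i : {i // i ∈ S} => c i) ↑C := by
    intro c hc c' hc' hcc
    refine h c hc c' hc' ?_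
    have hsub : S ⊆ Finset.univ.filter fun i => c i = c' i := by
      intro i hi
      simp only [Finset.mem_filter, Finset.mem_univ, true_and]
      exact congrFun hcc ⟨i, hi⟩
    calc m = S.card := hScard.symm
    _ ≤ _ := Finset.card_le_card hsub
  calc C.card ≤ Fintype.card ({i // i ∈ S} → Fin d) :=
        Finset.card_le_card_of_injOn _ (fun _ _ => Finset.mem_univ _) hinj
  _ = d ^ m := by rw [Fintype.card_fun, Fintype.card_fin, Fintype.card_coe, hScard]

/-- In a good code, the number of codewords extending a partial assignment on a set
`B` of at most `k` coordinates is exactly `d ^ (k - |B|)`. -/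
lemma good_count {d n k : ℕ} {C : Finset (Fin n → Fin d)} (hG : Good d n k C)
    (hk : k ≤ n) (B : Finset (Fin n)) (hB : B.card ≤ k) (b : {i : Fin n // i ∈ B} → Fin d) :
    (C.filter fun c => ∀ i : {i : Fin n // i ∈ B}, c i.1 = b i).card = d ^ (k - B.card) := by
  classical
  obtain ⟨S, hBS, hScard⟩ := Finset.exists_superset_card_eq (s := B) hB (by simpa using hk)
  set ρ : (Fin n → Fin d) → ({i : Fin n // i ∈ S} → Fin d) :=
    fun c => fun i => c i.1 with hρ
  have hagrS : ∀ c ∈ C, ∀ c' ∈ C, (∀ i : {i : Fin n // i ∈ S}, c i.1 = c' i.1) → c = c' := by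
    intro c hc c' hc' hcc
    refine hG.2 c hc c' hc' ?_
    have hsub : S ⊆ Finset.univ.filter fun i => c i = c' i := by
      intro i hi
      simp only [Finset.mem_filter, Finset.mem_univ, true_and]
      exact hcc ⟨i, hi⟩
    calc k = S.card := hScard.symm
    _ ≤ _ := Finset.card_le_card hsub
  -- each fiber of ρ over C has exactly one element
  have hfib : ∀ y : {i : Fin n // i ∈ S} → Fin d, (C.filter fun c => ρ c = y).card = 1 := by
    have hle : ∀ y : {i : Fin n // i ∈ S} → Fin d, (C.filter fun c => ρ c = y).card ≤ 1 := by
      intro y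
      refine Finset.card_le_one.2 ?_
      intro c hc c' hc'
      simp only [Finset.mem_filter] at hc hc'
      exact hagrS c hc.1 c' hc'.1 (fun i => by rw [show c i.1 = y i from congrFun hc.2 i,
        show c' i.1 = y i from congrFun hc'.2 i])
    have hsum : ∑ y : {i : Fin n // i ∈ S} → Fin d, (C.filter fun c => ρ c = y).card = C.card :=
      (Finset.card_eq_sum_card_fiberwise (fun c _ => Finset.mem_univ (ρ c))).symm
    have hcardy : Fintype.card ({i : Fin n // i ∈ S} → Fin d) = d ^ k := by
      rw [Fintype.card_fun, Fintype.card_fin, Fintype.card_coe, hScard]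
    have htot : ∑ y : {i : Fin n // i ∈ S} → Fin d, (C.filter fun c => ρ c = y).card
        = ∑ y : {i : Fin n // i ∈ S} → Fin d, 1 := by
      rw [hsum, hG.1, Finset.sum_const, smul_eq_mul, mul_one, Finset.card_univ, hcardy]
    have := (Finset.sum_eq_sum_iff_of_le (fun y _ => hle y)).1 htot
    intro y; exact this y (Finset.mem_univ y)
  -- now biject the codewords extending `b` with assignments on `S \ B`
  have hbij : (C.filter fun c => ∀ i : {i : Fin n // i ∈ B}, c i.1 = b i).card
      = Fintype.card ({i : Fin n // i ∈ S \ B} → Fin d) := by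
    rw [← Finset.card_univ]
    refine Finset.card_bij (fun c _ => fun i : {i : Fin n // i ∈ S \ B} => c i.1)
      (fun _ _ => Finset.mem_univ _) ?_ ?_
    · intro c hc c' hc' hcc
      simp only [Finset.mem_filter] at hc hc'
      refine hagrS c hc.1 c' hc'.1 ?_
      rintro ⟨i, hi⟩
      by_cases hiB : i ∈ B
      · rw [hc.2 ⟨i, hiB⟩, hc'.2 ⟨i, hiB⟩]
      · exact congrFun hcc ⟨i, Finset.mem_sdiff.2 ⟨hi, hiB⟩⟩
    · intro y _
      set z : {i : Fin n // i ∈ S} → Fin d :=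
        fun i => if h : i.1 ∈ B then b ⟨i.1, h⟩ else y ⟨i.1, Finset.mem_sdiff.2 ⟨i.2, h⟩⟩ with hz
      have h1 : (C.filter fun c => ρ c = z).Nonempty := by
        rw [← Finset.card_pos, hfib z]; norm_num
      obtain ⟨c, hc⟩ := h1
      simp only [Finset.mem_filter] at hc
      have hcz : ∀ i : {i : Fin n // i ∈ S}, c i.1 = z i := fun i => congrFun hc.2 i
      refine ⟨c, Finset.mem_filter.2 ⟨hc.1, ?_⟩, ?_⟩
      · rintro ⟨i, hi⟩
        have := hcz ⟨i, hBS hi⟩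
        rw [this, hz]
        simp [hi]
      · funext i
        have hiSB := Finset.mem_sdiff.1 i.2
        show c i.1 = y i
        have := hcz ⟨i.1, hiSB.1⟩
        rw [this, hz]
        simp [hiSB.2]
  rw [hbij, Fintype.card_fun, Fintype.card_fin, Fintype.card_coe,
    Finset.card_sdiff_of_subset hBS, hScard]

lemma good_to_AME {d n : ℕ} (hd : 2 ≤ d) {C : Finset (Fin n → Fin d)}
    (hG : Good d n (n / 2) C) :
    ∃ ψ : (Fin n → Fin d) → ℂ, IsAME n d ψ ∧ HasMinimalSupport n d ψ := by
  classical
  set k := n / 2 with hkdef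
  have hdR : (0:ℝ) < (d:ℝ) ^ k := by positivity
  set r : ℝ := (Real.sqrt ((d:ℝ) ^ k))⁻¹ with hrdef
  have hrpos : 0 < r := by
    rw [hrdef]; exact inv_pos.2 (Real.sqrt_pos.2 hdR)
  have hrr : r * r = ((d:ℝ) ^ k)⁻¹ := by
    rw [hrdef, ← mul_inv]
    rw [Real.mul_self_sqrt hdR.le]
  set ψ : (Fin n → Fin d) → ℂ := fun s => if s ∈ C then (r : ℂ) else 0 with hψ
  have hd0 : (d:ℂ) ≠ 0 := Nat.cast_ne_zero.2 (by omega)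
  have hdC : ((d:ℂ) ^ k) ≠ 0 := pow_ne_zero _ hd0
  have hterm : ∀ c1 c2 : Fin n → Fin d,
      ψ c1 * (starRingEnd ℂ) (ψ c2)
        = if c1 ∈ C ∧ c2 ∈ C then ((d:ℂ) ^ k)⁻¹ else 0 := by
    intro c1 c2
    rw [hψ]
    by_cases h1 : c1 ∈ C <;> by_cases h2 : c2 ∈ C <;> simp [h1, h2]
    rw [← Complex.ofReal_mul, hrr]
    push_cast
    ring
  refine ⟨ψ, ⟨?_, ?_⟩, ?_⟩
  · -- normalization
    have h1 : ∀ s : Fin n → Fin d, ‖ψ s‖ ^ 2 = if s ∈ C then ((d:ℝ) ^ k)⁻¹ else 0 := by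
      intro s
      rw [hψ]
      by_cases h : s ∈ C <;> simp [h]
      rw [sq, hrr]
    calc ∑ s : Fin n → Fin d, ‖ψ s‖ ^ 2
        = ∑ s : Fin n → Fin d, if s ∈ C then ((d:ℝ) ^ k)⁻¹ else 0 := by
          exact Finset.sum_congr rfl fun s _ => h1 s
      _ = ∑ s ∈ Finset.univ ∩ C, ((d:ℝ) ^ k)⁻¹ := Finset.sum_ite_mem _ _ _
      _ = 1 := by
          rw [Finset.univ_inter, Finset.sum_const, hG.1, nsmul_eq_mul]
          push_cast
          field_simp
  · -- reduced density matrices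
    intro B hB b b'
    have hBk : B.card ≤ k := hB
    have hkn : k ≤ n := Nat.div_le_self n 2
    by_cases hbb : b = b'
    · subst hbb
      rw [if_pos rfl]
      have hterm' : ∀ a : {i : Fin n // i ∉ B} → Fin d,
          ψ (combine B a b) * (starRingEnd ℂ) (ψ (combine B a b))
            = if combine B a b ∈ C then ((d:ℂ) ^ k)⁻¹ else 0 := by
        intro a
        rw [hterm]
        by_cases h : combine B a b ∈ C <;> simp [h]
      rw [Finset.sum_congr rfl fun a _ => hterm' a]
      have hcomb : ∀ c ∈ C.filter fun c => ∀ i : {i : Fin n // i ∈ B}, c i.1 = b i,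
          combine B (fun i : {i : Fin n // i ∉ B} => c i.1) b = c := by
        intro c hc
        simp only [Finset.mem_filter] at hc
        funext j
        by_cases hj : j ∈ B
        · simp [combine, hj, (hc.2 ⟨j, hj⟩).symm]
        · simp [combine, hj]
      have hbij : (Finset.univ.filter fun a : {i : Fin n // i ∉ B} → Fin d =>
          combine B a b ∈ C).card
          = (C.filter fun c => ∀ i : {i : Fin n // i ∈ B}, c i.1 = b i).card := by
        refine Finset.card_bij (fun a _ => combine B a b) ?_ ?_ ?_
        · intro a ha
          simp only [Finset.mem_filter, Finset.mem_univ, true_and] at ha ⊢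
          exact ⟨ha, fun i => by simp [combine, i.2]⟩
        · intro a ha a' ha' h
          funext i
          have := congrFun h i.1
          simpa [combine, i.2, Subtype.coe_eta] using this
        · intro c hc
          refine ⟨fun i => c i.1, Finset.mem_filter.2 ⟨Finset.mem_univ _, ?_⟩, hcomb c hc⟩
          rw [hcomb c hc]
          exact (Finset.mem_filter.1 hc).1
      rw [← Finset.sum_filter, Finset.sum_const, hbij,
        good_count hG hkn B hBk b, nsmul_eq_mul]
      push_cast
      rw [pow_sub₀ _ hd0 hBk]
      field_simp
    · rw [if_neg hbb]
      refine Finset.sum_eq_zero fun a _ => ?_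
      rw [hterm]
      rw [if_neg]
      rintro ⟨h1, h2⟩
      have heq : combine B a b = combine B a b' := by
        refine hG.2 _ h1 _ h2 ?_
        have hsub : Finset.univ.filter (fun i : Fin n => i ∉ B)
            ⊆ Finset.univ.filter fun i => combine B a b i = combine B a b' i := by
          intro i hi
          simp only [Finset.mem_filter, Finset.mem_univ, true_and] at hi ⊢
          simp [combine, hi]
        have hcard : (Finset.univ.filter (fun i : Fin n => i ∉ B)).card = n - B.card := by
          have := Finset.card_filter_add_card_filter_not
            (s := (Finset.univ : Finset (Fin n))) (fun i : Fin n => i ∈ B)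
          simp only [Finset.filter_mem_eq_inter, Finset.univ_inter, Finset.card_univ,
            Fintype.card_fin] at this
          omega
        have : k ≤ n - B.card := by omega
        calc k ≤ n - B.card := this
          _ = (Finset.univ.filter (fun i : Fin n => i ∉ B)).card := hcard.symm
          _ ≤ _ := Finset.card_le_card hsub
      exact hbb (funext fun i => by
        have := congrFun heq i.1
        simpa [combine, i.2] using this)
  · -- minimal support
    have : {s : Fin n → Fin d | ψ s ≠ 0} = ↑C := by
      ext s
      rw [hψ]
      by_cases h : s ∈ C <;> simp [h]
      exact hrpos.ne'
    rw [HasMinimalSupport, this, Set.ncard_coe_finset, hG.1]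

/-- A minimal-support AME state yields a good code (its support). -/
lemma AME_to_good (hd : 2 ≤ d) {ψ : (Fin n → Fin d) → ℂ}
    (hA : IsAME n d ψ) (hS : HasMinimalSupport n d ψ) :
    ∃ C : Finset (Fin n → Fin d), Good d n (n / 2) C := by
  classical
  set C := Finset.univ.filter fun s : Fin n → Fin d => ψ s ≠ 0 with hC
  have hcoe : {s : Fin n → Fin d | ψ s ≠ 0} = ↑C := by ext s; simp [hC]
  have hcard : C.card = d ^ (n / 2) := by
    rw [← Set.ncard_coe_finset, ← hcoe]; exact hS
  refine ⟨C, hcard, ?_⟩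
  intro c hc c' hc' hagr
  obtain ⟨B, hBsub, hBcard⟩ := Finset.exists_subset_card_eq
    (s := Finset.univ.filter fun i => c i = c' i) (n := n / 2) hagr
  -- restriction to B is injective on C since it is surjective and the cards match
  set ρ : (Fin n → Fin d) → ({i : Fin n // i ∈ B} → Fin d) := fun c => fun i => c i.1 with hρ
  have hsurj : ∀ y : {i : Fin n // i ∈ B} → Fin d, ∃ s ∈ C, ρ s = y := by
    intro y
    have h2 := (hA.2 B (le_of_eq hBcard) y y)
    rw [if_pos rfl] at h2
    have hne : (∑ a : {i : Fin n // i ∉ B} → Fin d,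
        ψ (combine B a y) * (starRingEnd ℂ) (ψ (combine B a y))) ≠ 0 := by
      rw [h2]
      refine inv_ne_zero (pow_ne_zero _ (Nat.cast_ne_zero.2 (by omega)))
    obtain ⟨a, -, ha⟩ := Finset.exists_ne_zero_of_sum_ne_zero hne
    have hψa : ψ (combine B a y) ≠ 0 := fun h => ha (by rw [h]; simp)
    refine ⟨combine B a y, by simp [hC, hψa], ?_⟩
    funext i
    show combine B a y i.1 = y i
    simp [combine, i.2]
  have himg : (C.image ρ) = Finset.univ := by
    refine Finset.eq_univ_of_forall fun y => ?_
    obtain ⟨s, hs, hsy⟩ := hsurj y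
    exact Finset.mem_image.2 ⟨s, hs, hsy⟩
  have hinj : Set.InjOn ρ ↑C := by
    refine Finset.card_image_iff.1 ?_
    rw [himg, Finset.card_univ, Fintype.card_fun, Fintype.card_fin, Fintype.card_coe,
      hBcard, hcard]
  refine hinj hc hc' ?_
  funext i
  have := hBsub i.2
  simp only [Finset.mem_filter] at this
  exact this.2

lemma agr_succ (c c' : Fin (n + 1) → Fin d) :
    agr c c' = agr (c ∘ Fin.castSucc) (c' ∘ Fin.castSucc)
      + (if c (Fin.last n) = c' (Fin.last n) then 1 else 0) := by
  classical
  unfold agr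
  rw [Finset.card_filter, Finset.card_filter, Fin.sum_univ_castSucc]
  rfl

lemma good_puncture {d n k : ℕ} {C : Finset (Fin (n + 1) → Fin d)} (hk : k ≤ n)
    (hG : Good d (n + 1) k C) :
    Good d n k (C.image fun c => c ∘ Fin.castSucc) := by
  classical
  have key : ∀ c ∈ C, ∀ c' ∈ C, k ≤ agr (c ∘ Fin.castSucc) (c' ∘ Fin.castSucc) → c = c' := by
    intro c hc c' hc' h
    refine hG.2 c hc c' hc' ?_
    rw [agr_succ]
    omega
  constructor
  · rw [Finset.card_image_of_injOn, hG.1]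
    intro c hc c' hc' h
    refine key c (Finset.mem_coe.1 hc) c' (Finset.mem_coe.1 hc') ?_
    have h' : c ∘ Fin.castSucc = c' ∘ Fin.castSucc := h
    rw [h', agr_self]
    exact hk
  · intro x hx y hy hagr
    obtain ⟨c, hc, rfl⟩ := Finset.mem_image.1 hx
    obtain ⟨c', hc', rfl⟩ := Finset.mem_image.1 hy
    rw [key c hc c' hc' hagr]

lemma good_shorten {d n k : ℕ} {C : Finset (Fin (n + 1) → Fin d)} (hd : 1 ≤ d)
    (hk : k + 1 ≤ n + 1) (hG : Good d (n + 1) (k + 1) C) :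
    ∃ C' : Finset (Fin n → Fin d), Good d n k C' := by
  classical
  have hdpos : 0 < d := hd
  set v : Fin d := ⟨0, hdpos⟩ with hv
  set D := C.filter fun c => c (Fin.last n) = v with hD
  have hDcard : D.card = d ^ k := by
    have := good_count hG hk ({Fin.last n}) (by simp)
      (fun _ => v)
    rw [Finset.card_singleton] at this
    have heq : D = C.filter fun c => ∀ i : {i : Fin (n+1) // i ∈ ({Fin.last n} :
        Finset (Fin (n+1)))}, c i.1 = v := by
      rw [hD]
      refine Finset.filter_congr fun c _ => ?_
      constructor
      · rintro h ⟨i, hi⟩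
        rw [Finset.mem_singleton] at hi
        subst hi; exact h
      · intro h; exact h ⟨Fin.last n, Finset.mem_singleton_self _⟩
    rw [heq, this, Nat.add_sub_cancel]
  have hDlast : ∀ c ∈ D, c (Fin.last n) = v := by
    intro c hc; exact (Finset.mem_filter.1 hc).2
  have hDC : ∀ c ∈ D, c ∈ C := fun c hc => (Finset.mem_filter.1 hc).1
  have key : ∀ c ∈ D, ∀ c' ∈ D, k ≤ agr (c ∘ Fin.castSucc) (c' ∘ Fin.castSucc) → c = c' := by
    intro c hc c' hc' h
    refine hG.2 c (hDC c hc) c' (hDC c' hc') ?_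
    rw [agr_succ, hDlast c hc, hDlast c' hc', if_pos rfl]
    omega
  refine ⟨D.image fun c => c ∘ Fin.castSucc, ?_, ?_⟩
  · rw [Finset.card_image_of_injOn, hDcard]
    intro c hc c' hc' h
    refine key c (Finset.mem_coe.1 hc) c' (Finset.mem_coe.1 hc') ?_
    have h' : c ∘ Fin.castSucc = c' ∘ Fin.castSucc := h
    rw [h', agr_self]
    omega
  · intro x hx y hy hagr
    obtain ⟨c, hc, rfl⟩ := Finset.mem_image.1 hx
    obtain ⟨c', hc', rfl⟩ := Finset.mem_image.1 hy
    rw [key c hc c' hc' hagr]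

/-- Reduce a good code of any length `n ≥ d + 2` to one of length `d + 2`. -/
lemma good_reduce {d : ℕ} (hd : 1 ≤ d) :
    ∀ n : ℕ, d + 2 ≤ n → (∃ C : Finset (Fin n → Fin d), Good d n (n / 2) C) →
      ∃ C : Finset (Fin (d + 2) → Fin d), Good d (d + 2) ((d + 2) / 2) C := by
  intro n hn
  induction n, hn using Nat.le_induction with
  | base => exact id
  | succ n hn ih =>
    rintro ⟨C, hC⟩
    refine ih ?_
    rcases Nat.even_or_odd n with he | ho
    · -- n even : (n+1)/2 = n/2, puncture
      have h2 : (n + 1) / 2 = n / 2 := by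
        obtain ⟨m, rfl⟩ := he
        omega
      rw [h2] at hC
      exact ⟨_, good_puncture (by omega) hC⟩
    · -- n odd : (n+1)/2 = n/2 + 1, shorten
      have h2 : (n + 1) / 2 = n / 2 + 1 := by
        obtain ⟨m, rfl⟩ := ho
        omega
      rw [h2] at hC
      exact good_shorten hd (by omega) hC

/-- A good code of parameters `(n,k)` with `1 ≤ k ≤ n`, `2 ≤ d` is an MDS code. -/
lemma good_to_MDS {d n k : ℕ} (hd : 2 ≤ d) (hk1 : 1 ≤ k) (hk : k ≤ n)
    {C : Finset (Fin n → Fin d)} (hG : Good d n k C) : IsMDSCode d n (n - k + 1) C := by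
  classical
  have hagrlt : ∀ c ∈ C, ∀ c' ∈ C, c ≠ c' → agr c c' ≤ k - 1 := by
    intro c hc c' hc' hne
    by_contra h
    exact hne (hG.2 c hc c' hc' (by omega))
  have hdistlb : ∀ w ∈ C, ∀ w' ∈ C, w ≠ w' → n - k + 1 ≤ hammingDist w w' := by
    intro w hw w' hw' hne
    have h1 := agr_add_hammingDist w w'
    have h2 := hagrlt w hw w' hw' hne
    omega
  refine ⟨by rw [hG.1]; congr 1; omega, hdistlb, ?_⟩
  by_contra hno
  push_neg at hno
  have hall : ∀ c ∈ C, ∀ c' ∈ C, k - 1 ≤ agr c c' → c = c' := by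
    intro c hc c' hc' h
    by_contra hne
    have h1 := hdistlb c hc c' hc' hne
    have h2 := hno c hc c' hc' hne
    have h3 := agr_add_hammingDist c c'
    have h4 : hammingDist c c' ≤ n := by omega
    omega
  have hle := card_le_of_determined (d := d) (by omega) C hall
  rw [hG.1] at hle
  have : d ^ (k - 1) < d ^ k := Nat.pow_lt_pow_right (by omega) (by omega)
  omega

section RS

variable {F : Type} [Field F] [Fintype F] [DecidableEq F]

/-- evaluation of the polynomial with coefficients `u` at `x` -/
def pe {k : ℕ} (u : Fin k → F) (x : F) : F := ∑ j : Fin k, u j * x ^ (j : ℕ)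

/-- A nonzero polynomial of degree `< k` has at most `k - 1` roots, improved to
`k - 2` if its top coefficient vanishes. -/
lemma pe_roots {k : ℕ} (hk : 2 ≤ k) {u : Fin k → F} (hu : u ≠ 0) :
    (Finset.univ.filter fun x : F => pe u x = 0).card
      + (if u ⟨k - 1, by omega⟩ = 0 then 1 else 0) ≤ k - 1 := by
  classical
  set f : Polynomial F := ∑ j : Fin k, Polynomial.C (u j) * Polynomial.X ^ (j : ℕ) with hf
  have hcoeff : ∀ m : ℕ, f.coeff m = if h : m < k then u ⟨m, h⟩ else 0 := by
    intro m
    rw [hf, Polynomial.finset_sum_coeff]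
    by_cases h : m < k
    · rw [dif_pos h]
      rw [Finset.sum_eq_single (⟨m, h⟩ : Fin k)]
      · simp
      · intro j _ hj
        rw [Polynomial.coeff_C_mul, Polynomial.coeff_X_pow, if_neg, mul_zero]
        exact fun hc => hj (Fin.ext hc.symm)
      · simp
    · rw [dif_neg h]
      refine Finset.sum_eq_zero fun j _ => ?_
      rw [Polynomial.coeff_C_mul, Polynomial.coeff_X_pow, if_neg, mul_zero]
      intro hc
      exact h (hc ▸ j.2)
  have heval : ∀ x : F, f.eval x = pe u x := by
    intro x
    rw [hf, Polynomial.eval_finset_sum]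
    simp [pe]
  have hne : f ≠ 0 := by
    intro h0
    apply hu
    funext j
    have := hcoeff j
    rw [h0, Polynomial.coeff_zero, dif_pos j.2] at this
    simpa using this.symm
  have hroots : (Finset.univ.filter fun x : F => pe u x = 0).card ≤ f.natDegree := by
    have hsub : (Finset.univ.filter fun x : F => pe u x = 0) ⊆ f.roots.toFinset := by
      intro x hx
      simp only [Finset.mem_filter, Finset.mem_univ, true_and] at hx
      rw [Multiset.mem_toFinset, Polynomial.mem_roots hne]
      rw [Polynomial.IsRoot, heval x]
      exact hx
    calc (Finset.univ.filter fun x : F => pe u x = 0).card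
        ≤ f.roots.toFinset.card := Finset.card_le_card hsub
      _ ≤ Multiset.card f.roots := Multiset.toFinset_card_le _
      _ ≤ f.natDegree := Polynomial.card_roots' f
  by_cases htop : u ⟨k - 1, by omega⟩ = 0
  · rw [if_pos htop]
    have hdeg : f.natDegree ≤ k - 2 := by
      rw [Polynomial.natDegree_le_iff_coeff_eq_zero]
      intro m hm
      rw [hcoeff m]
      by_cases h : m < k
      · rw [dif_pos h]
        have : m = k - 1 := by omega
        subst this
        exact htop
      · rw [dif_neg h]
    omega
  · rw [if_neg htop]
    have hdeg : f.natDegree ≤ k - 1 := by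
      rw [Polynomial.natDegree_le_iff_coeff_eq_zero]
      intro m hm
      rw [hcoeff m, dif_neg (by omega)]
    omega

end RS

/-- Existence of a good code of length `d + 1` and dimension `(d+1)/2` for `d` a
prime power (an extended Reed–Solomon code). -/
lemma exists_good_RS {d : ℕ} (hd : 8 ≤ d) (hp : IsPrimePow d) :
    ∃ C : Finset (Fin (d + 1) → Fin d), Good d (d + 1) ((d + 1) / 2) C := by
  classical
  rw [isPrimePow_nat_iff] at hp
  obtain ⟨p, m, hpp, hm, hpm⟩ := hp
  haveI : Fact p.Prime := ⟨hpp⟩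
  set F := GaloisField p m with hF
  haveI : Fintype F := Fintype.ofFinite F
  have hcardF : Fintype.card F = d := by
    have h1 := GaloisField.card p m (by omega)
    rw [Nat.card_eq_fintype_card] at h1
    rw [show Fintype.card F = Fintype.card (GaloisField p m) from rfl, h1, hpm]
  set e : F ≃ Fin d := Fintype.equivFinOfCardEq hcardF with he
  set k := (d + 1) / 2 with hk
  have hk2 : 2 ≤ k := by omega
  have hkd : k ≤ d := by omega
  -- the extended Reed–Solomon encoding
  set w : (Fin k → F) → (Fin (d + 1) → Fin d) := fun u i =>
    if h : (i : ℕ) < d then e (pe u (e.symm ⟨i, h⟩)) else e (u ⟨k - 1, by omega⟩) with hw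
  have hwcast : ∀ (u : Fin k → F) (i : Fin d), w u (Fin.castSucc i) = e (pe u (e.symm i)) := by
    intro u i
    have hlt : ((Fin.castSucc i : Fin (d + 1)) : ℕ) < d := i.2
    rw [hw]
    simp only [dif_pos hlt]
    have : (⟨(i.castSucc : ℕ), hlt⟩ : Fin d) = i := Fin.ext rfl
    rw [this]
  have hwlast : ∀ u : Fin k → F, w u (Fin.last d) = e (u ⟨k - 1, by omega⟩) := by
    intro u
    have hnlt : ¬ ((Fin.last d : Fin (d + 1)) : ℕ) < d := by simp
    rw [hw]
    simp only [dif_neg hnlt]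
  have hagr : ∀ u u' : Fin k → F, u ≠ u' → agr (w u) (w u') ≤ k - 1 := by
    intro u u' huu
    have hv : u - u' ≠ 0 := sub_ne_zero.2 huu
    have hroots := pe_roots hk2 hv
    have hpesub : ∀ x : F, pe (u - u') x = pe u x - pe u' x := by
      intro x
      simp [pe, Finset.sum_sub_distrib, sub_mul]
    rw [agr_succ]
    have hfirst : agr (w u ∘ Fin.castSucc) (w u' ∘ Fin.castSucc)
        = (Finset.univ.filter fun x : F => pe (u - u') x = 0).card := by
      unfold agr
      refine Finset.card_bij (fun i _ => e.symm i) ?_ ?_ ?_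
      · intro i hi
        simp only [Finset.mem_filter, Finset.mem_univ, true_and, Function.comp] at hi ⊢
        rw [hwcast, hwcast] at hi
        have := e.injective hi
        rw [hpesub, this, sub_self]
      · intro i _ j _ hij
        exact e.symm.injective hij
      · intro x hx
        simp only [Finset.mem_filter, Finset.mem_univ, true_and] at hx
        refine ⟨e x, ?_, e.symm_apply_apply x⟩
        simp only [Finset.mem_filter, Finset.mem_univ, true_and, Function.comp]
        rw [hwcast, hwcast, Equiv.symm_apply_apply]
        have h0 : pe u x - pe u' x = 0 := by rw [← hpesub]; exact hx
        rw [sub_eq_zero.1 h0]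
    rw [hfirst]
    have hlast : (if w u (Fin.last d) = w u' (Fin.last d) then 1 else 0)
        = (if (u - u') ⟨k - 1, by omega⟩ = 0 then 1 else 0) := by
      rw [hwlast, hwlast]
      by_cases h : u ⟨k - 1, by omega⟩ = u' ⟨k - 1, by omega⟩
      · rw [if_pos (by rw [h]), if_pos (by simp [h])]
      · rw [if_neg (fun hc => h (e.injective hc)), if_neg (by simpa [sub_eq_zero] using h)]
    rw [hlast]
    exact hroots
  have hwinj : Function.Injective w := by
    intro u u' h
    by_contra hne
    have h1 := hagr u u' hne
    have h2 : agr (w u) (w u') = d + 1 := by rw [h]; exact agr_self _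
    omega
  refine ⟨Finset.univ.image w, ?_, ?_⟩
  · rw [Finset.card_image_of_injective _ hwinj, Finset.card_univ, Fintype.card_fun,
      hcardF, Fintype.card_fin]
  · intro c hc c' hc' hag
    obtain ⟨u, -, rfl⟩ := Finset.mem_image.1 hc
    obtain ⟨u', -, rfl⟩ := Finset.mem_image.1 hc'
    by_contra hne
    have hne' : u ≠ u' := fun h => hne (by rw [h])
    have := hagr u u' hne'
    omega

/-- Let `d ≥ 8` be a prime power and assume the relevant instance of the general MDS
conjecture: there is no MDS code over `Fin d` of wordlength `d + 2` and combinatorial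
dimension `⌊(d+2)/2⌋` (equivalently, minimum distance `d + 2 - ⌊(d+2)/2⌋ + 1`). Then
`𝒩(d) = d + 1`. -/
theorem N_eq_d_plus_one_of_mds_conjecture (d : ℕ) (hd : 8 ≤ d) (hp : IsPrimePow d)
    (hMDS : ¬ ∃ C : Finset (Fin (d + 2) → Fin d),
      IsMDSCode d (d + 2) (d + 2 - (d + 2) / 2 + 1) C) :
    (∃ ψ : (Fin (d + 1) → Fin d) → ℂ,
        IsAME (d + 1) d ψ ∧ HasMinimalSupport (d + 1) d ψ) ∧
    (∀ n : ℕ, d + 2 ≤ n →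
      ¬ ∃ ψ : (Fin n → Fin d) → ℂ, IsAME n d ψ ∧ HasMinimalSupport n d ψ) := by
  constructor
  · obtain ⟨C, hC⟩ := exists_good_RS hd hp
    exact good_to_AME (by omega) hC
  · rintro n hn ⟨ψ, hA, hS⟩
    obtain ⟨C, hC⟩ := AME_to_good (by omega) hA hS
    obtain ⟨C', hC'⟩ := good_reduce (by omega) n hn ⟨C, hC⟩
    exact hMDS ⟨C', good_to_MDS (by omega) (by omega) (by omega) hC'⟩


end AMEPaper
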